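/- For finitely supported probability measures μ ≤_c ν on ℝ, there exists exactly one left-monotone martingale transport plan in M₂(μ,ν). -/

import Mathlib

open Finset


/-- Affine functions are convex. -/
lemma affine_convexOn (m c : ℝ) : ConvexOn ℝ Set.univ (fun t => m * t + c) := by
  refine ⟨convex_univ, fun u _ v _ a b ha hb hab => ?_⟩
  simp only [smul_eq_mul]
  refine le_of_eq ?_
  linear_combination (-c) * hab

/-- Single-crossing lemma: a signed vector with one sign change (positive below `p`,
negative above `p`), zero total mass and zero mean must vanish. -/
lemma cross_zero {M : ℕ} {y : Fin M → ℝ} (hy : StrictMono y) {d : Fin M → ℝ} (p : Fin M)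
    (h1 : ∀ i, i < p → 0 ≤ d i) (h2 : ∀ i, p < i → d i ≤ 0)
    (hs : ∑ i, d i = 0) (hm : ∑ i, d i * y i = 0) : ∀ i, d i = 0 := by
  have key : ∑ i, d i * (y i - y p) = 0 := by
    have : ∑ i, d i * (y i - y p) = (∑ i, d i * y i) - (∑ i, d i) * y p := by
      rw [Finset.sum_mul, ← Finset.sum_sub_distrib]; exact Finset.sum_congr rfl (fun i _ => by ring)
    rw [this, hs, hm]; ring
  have hterm : ∀ i ∈ Finset.univ, d i * (y i - y p) ≤ 0 := by
    intro i _
    rcases lt_trichotomy i p with h | h | h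
    · exact mul_nonpos_of_nonneg_of_nonpos (h1 i h) (by linarith [hy h])
    · subst h; simp
    · exact mul_nonpos_of_nonpos_of_nonneg (h2 i h) (by linarith [hy h])
  have hz := (Finset.sum_eq_zero_iff_of_nonpos hterm).1 key
  have hne : ∀ i, i ≠ p → d i = 0 := by
    intro i hip
    have := hz i (Finset.mem_univ i)
    rcases mul_eq_zero.1 this with h | h
    · exact h
    · exact absurd (by linarith : y i = y p) (fun hh => hip (hy.injective hh))
  intro i
  by_cases hip : i = p
  · subst hip
    have : ∑ j, d j = d i + ∑ j ∈ Finset.univ.erase i, d j := by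
      rw [← Finset.sum_erase_add _ _ (Finset.mem_univ i)]; ring
    have h0 : ∑ j ∈ Finset.univ.erase i, d j = 0 :=
      Finset.sum_eq_zero (fun j hj => hne j (Finset.ne_of_mem_erase hj))
    rw [this, h0] at hs; linarith
  · exact hne i hip


/-- The defining properties of a "shadow". -/
def IsShadow {M : ℕ} (y ϑ : Fin M → ℝ) (mass mean : ℝ) (θ : Fin M → ℝ) : Prop :=
  (∀ i, 0 ≤ θ i) ∧ (∀ i, θ i ≤ ϑ i) ∧ (∑ i, θ i) = mass ∧ (∑ i, θ i * y i) = mean ∧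
  (∀ i l k : Fin M, i < l → l < k → 0 < θ i → 0 < θ k → θ l = ϑ l)

/-- Support endpoints of a nonzero nonnegative vector. -/
lemma exists_support_bounds {M : ℕ} {θ : Fin M → ℝ} (h0 : ∀ i, 0 ≤ θ i)
    (hne : (∑ i, θ i) ≠ 0) :
    ∃ a b : Fin M, a ≤ b ∧ 0 < θ a ∧ 0 < θ b ∧
      (∀ i, i < a → θ i = 0) ∧ (∀ i, b < i → θ i = 0) := by
  classical
  have hSne : (Finset.univ.filter (fun i => 0 < θ i)).Nonempty := by
    by_contra h
    apply hne
    refine Finset.sum_eq_zero (fun i _ => ?_)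
    by_contra hi
    exact h ⟨i, Finset.mem_filter.2 ⟨Finset.mem_univ i, lt_of_le_of_ne (h0 i) (Ne.symm hi)⟩⟩
  set S := Finset.univ.filter (fun i => 0 < θ i) with hS
  refine ⟨S.min' hSne, S.max' hSne, S.min'_le _ (S.max'_mem hSne), ?_, ?_, ?_, ?_⟩
  · exact (Finset.mem_filter.1 (S.min'_mem hSne)).2
  · exact (Finset.mem_filter.1 (S.max'_mem hSne)).2
  · intro i hi
    by_contra h
    have : i ∈ S := Finset.mem_filter.2 ⟨Finset.mem_univ i, lt_of_le_of_ne (h0 i) (Ne.symm h)⟩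
    exact absurd (S.min'_le i this) (not_le.2 hi)
  · intro i hi
    by_contra h
    have : i ∈ S := Finset.mem_filter.2 ⟨Finset.mem_univ i, lt_of_le_of_ne (h0 i) (Ne.symm h)⟩
    exact absurd (S.le_max' i this) (not_le.2 hi)

/-- Uniqueness of shadows. -/
lemma shadow_unique {M : ℕ} {y ϑ : Fin M → ℝ} (hy : StrictMono y) {mass mean : ℝ}
    (hmass : 0 < mass) {θ θ' : Fin M → ℝ}
    (h : IsShadow y ϑ mass mean θ) (h' : IsShadow y ϑ mass mean θ') : θ = θ' := by
  obtain ⟨h0, hle, hs, hm, hfull⟩ := h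
  obtain ⟨h0', hle', hs', hm', hfull'⟩ := h'
  obtain ⟨a, b, hab, ha, hb, hla, hgb⟩ := exists_support_bounds h0 (by rw [hs]; exact hmass.ne')
  obtain ⟨a', b', hab', ha', hb', hla', hgb'⟩ :=
    exists_support_bounds h0' (by rw [hs']; exact hmass.ne')
  -- saturation strictly inside the support interval
  have hin : ∀ i, a < i → i < b → θ i = ϑ i := fun i h1 h2 => hfull a i b h1 h2 ha hb
  have hin' : ∀ i, a' < i → i < b' → θ' i = ϑ i := fun i h1 h2 => hfull' a' i b' h1 h2 ha' hb'
  set d : Fin M → ℝ := fun i => θ i - θ' i with hd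
  have hds : ∑ i, d i = 0 := by simp only [hd, Finset.sum_sub_distrib, hs, hs', sub_self]
  have hdm : ∑ i, d i * y i = 0 := by
    have : ∑ i, d i * y i = (∑ i, θ i * y i) - (∑ i, θ' i * y i) := by
      rw [← Finset.sum_sub_distrib]; congr 1; funext i; ring
    rw [this, hm, hm', sub_self]
  have hds' : ∑ i, (-d) i = 0 := by simp [hds]
  have hdm' : ∑ i, (-d) i * y i = 0 := by
    simp only [Pi.neg_apply, neg_mul, Finset.sum_neg_distrib, hdm, neg_zero]
  have goal_of : (∀ i, d i = 0) → θ = θ' := by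
    intro hz; funext i; have := hz i; simp only [hd] at this; linarith
  -- main case analysis
  rcases lt_trichotomy a a' with hc | hc | hc
  · -- a < a' : single crossing at p = b
    refine goal_of (cross_zero hy b (fun i hi => ?_) (fun i hi => ?_) hds hdm)
    · rcases lt_trichotomy i a with h1 | h1 | h1
      · simp [hd, hla i h1, hla' i (h1.trans hc)]
      · subst h1; simp [hd, hla' i hc]; linarith [h0 i]
      · have := hin i h1 hi; simp [hd, this]; linarith [hle' i]
    · simp [hd, hgb i hi]; linarith [h0' i]
  · -- a = a'
    rcases lt_trichotomy b b' with hcb | hcb | hcb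
    · -- b < b' : single crossing at p = a, d ≤ 0 above a
      refine goal_of (cross_zero hy a (fun i hi => ?_) (fun i hi => ?_) hds hdm)
      · simp [hd, hla i hi, hla' i (hc ▸ hi)]
      · rcases lt_or_ge i b' with h1 | h1
        · have := hin' i (hc ▸ hi) h1; simp [hd, this]; linarith [hle i]
        · have hbi : b < i := lt_of_lt_of_le hcb h1
          simp [hd, hgb i hbi]; linarith [h0' i]
    · -- b = b' : two-point argument
      subst hcb
      have hz : ∀ i, i ≠ a → i ≠ b → d i = 0 := by
        intro i hia hib
        rcases lt_trichotomy i a with h1 | h1 | h1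
        · simp [hd, hla i h1, hla' i (hc ▸ h1)]
        · exact absurd h1 hia
        · rcases lt_trichotomy i b with h2 | h2 | h2
          · rw [hd]; simp [hin i h1 h2, hin' i (hc ▸ h1) h2]
          · exact absurd h2 hib
          · simp [hd, hgb i h2, hgb' i h2]
      by_cases hab2 : a = b
      · -- single support point
        refine goal_of (fun i => ?_)
        by_cases hia : i = a
        · subst hia
          have : ∑ j, d j = d i + ∑ j ∈ Finset.univ.erase i, d j := by
            rw [← Finset.sum_erase_add _ _ (Finset.mem_univ i)]; ring
          have h00 : ∑ j ∈ Finset.univ.erase i, d j = 0 :=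
            Finset.sum_eq_zero (fun j hj => hz j (Finset.ne_of_mem_erase hj)
              (by rw [← hab2]; exact Finset.ne_of_mem_erase hj))
          rw [this, h00] at hds; linarith
        · exact hz i hia (fun hh => hia (hh.trans hab2.symm))
      · -- two support points a < b
        have hsub : ∑ i ∈ ({a, b} : Finset (Fin M)), d i = 0 := by
          rw [Finset.sum_subset (Finset.subset_univ _) (fun i _ hi => ?_)]
          · exact hds
          · have hia : i ≠ a := fun hh => hi (by simp [hh])
            have hib : i ≠ b := fun hh => hi (by simp [hh])
            exact hz i hia hib
        have hsub2 : ∑ i ∈ ({a, b} : Finset (Fin M)), d i * y i = 0 := by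
          rw [Finset.sum_subset (Finset.subset_univ _) (fun i _ hi => ?_)]
          · exact hdm
          · have hia : i ≠ a := fun hh => hi (by simp [hh])
            have hib : i ≠ b := fun hh => hi (by simp [hh])
            rw [hz i hia hib, zero_mul]
        rw [Finset.sum_pair hab2] at hsub
        rw [Finset.sum_pair hab2] at hsub2
        have hyy : y a ≠ y b := fun hh => hab2 (hy.injective hh)
        have hda : d a = 0 := by
          have : d a * y a + (- d a) * y b = 0 := by
            have : d b = - d a := by linarith
            rw [this] at hsub2; linarith [hsub2]
          have h2 : d a * (y a - y b) = 0 := by linarith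
          rcases mul_eq_zero.1 h2 with h | h
          · exact h
          · exact absurd (by linarith : y a = y b) hyy
        refine goal_of (fun i => ?_)
        by_cases hia : i = a
        · rw [hia]; exact hda
        · by_cases hib : i = b
          · rw [hib]; linarith [hsub, hda]
          · exact hz i hia hib
    · -- b' < b : symmetric to b < b'
      have := cross_zero hy a (fun i hi => ?_) (fun i hi => ?_) hds' hdm'
      · refine goal_of (fun i => ?_); have := this i; simp at this; linarith
      · simp only [Pi.neg_apply, hd]
        rw [hla i hi, hla' i (hc ▸ hi)]; simp
      · rcases lt_or_ge i b with h1 | h1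
        · have := hin i hi h1; simp only [Pi.neg_apply, hd, this]; linarith [hle' i]
        · have hbi : b' < i := lt_of_lt_of_le hcb h1
          simp only [Pi.neg_apply, hd, hgb' i hbi]; linarith [h0 i]
  · -- a' < a : symmetric, crossing at p = b'
    have := cross_zero hy b' (fun i hi => ?_) (fun i hi => ?_) hds' hdm'
    · refine goal_of (fun i => ?_); have := this i; simp at this; linarith
    · rcases lt_trichotomy i a' with h1 | h1 | h1
      · simp only [Pi.neg_apply, hd]; rw [hla i (h1.trans hc), hla' i h1]; simp
      · subst h1; simp only [Pi.neg_apply, hd, hla i hc]; simp; linarith [h0' i]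
      · have := hin' i h1 hi; simp only [Pi.neg_apply, hd, this]; linarith [hle i]
    · simp only [Pi.neg_apply, hd, hgb' i hi]; linarith [h0 i]

section Chord
variable {f : ℝ → ℝ} {p q : ℝ}

/-- Outside `(p, q)` the chord lies below the convex function. -/
lemma chord_le_outside (hf : ConvexOn ℝ Set.univ f) (hpq : p < q) {t : ℝ}
    (ht : t ≤ p ∨ q ≤ t) : f p + (f q - f p) / (q - p) * (t - p) ≤ f t := by
  have hqp : (0:ℝ) < q - p := by linarith
  have e1 : f p + (f q - f p) / (q - p) * (t - p) = f p + (f q - f p) * (t - p) / (q - p) := by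
    ring
  rw [e1]
  rcases ht with ht | ht
  · rcases eq_or_lt_of_le ht with rfl | ht
    · simp
    · have hsl := hf.slope_mono_adjacent (Set.mem_univ t) (Set.mem_univ q) ht hpq
      rw [div_le_div_iff₀ (by linarith) hqp] at hsl
      have key : (f q - f p) * (t - p) ≤ (f t - f p) * (q - p) := by nlinarith [hsl]
      have := (div_le_iff₀ hqp).2 key
      linarith
  · rcases eq_or_lt_of_le ht with rfl | ht
    · have : f p + (f q - f p) * (q - p) / (q - p) = f q := by field_simp; ring
      linarith
    · have hsl := hf.slope_mono_adjacent (Set.mem_univ p) (Set.mem_univ t) hpq ht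
      rw [div_le_div_iff₀ hqp (by linarith)] at hsl
      have key : (f q - f p) * (t - p) ≤ (f t - f p) * (q - p) := by nlinarith [hsl]
      have := (div_le_iff₀ hqp).2 key
      linarith

/-- On `[p, q]` the convex function lies below the chord. -/
lemma le_chord_inside (hf : ConvexOn ℝ Set.univ f) (hpq : p < q) {t : ℝ}
    (h1 : p ≤ t) (h2 : t ≤ q) : f t ≤ f p + (f q - f p) / (q - p) * (t - p) := by
  have hqp : (0:ℝ) < q - p := by linarith
  have e1 : f p + (f q - f p) / (q - p) * (t - p) = f p + (f q - f p) * (t - p) / (q - p) := by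
    ring
  rw [e1]
  rcases eq_or_lt_of_le h1 with rfl | h1
  · simp
  rcases eq_or_lt_of_le h2 with rfl | h2
  · have : f p + (f t - f p) * (t - p) / (t - p) = f t := by field_simp; ring
    linarith
  have hsl := hf.slope_mono_adjacent (Set.mem_univ p) (Set.mem_univ q) h1 h2
  rw [div_le_div_iff₀ (by linarith) (by linarith)] at hsl
  have key : (f t - f p) * (q - p) ≤ (f q - f p) * (t - p) := by nlinarith [hsl]
  have := (le_div_iff₀ hqp).2 key
  linarith

end Chord

/-- Removing a shadow (and the corresponding atom) preserves the convex order. -/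
lemma shadow_reduce {N M : ℕ} (x : Fin N → ℝ) (ω : Fin N → ℝ) (hω : ∀ j, 0 ≤ ω j)
    {y ϑ θ : Fin M → ℝ} (hy : StrictMono y) {m0 x0 : ℝ} (hm0 : 0 < m0)
    (hsh : IsShadow y ϑ m0 (m0 * x0) θ)
    (hcx : ∀ f : ℝ → ℝ, ConvexOn ℝ Set.univ f →
      m0 * f x0 + ∑ j, ω j * f (x j) ≤ ∑ i, ϑ i * f (y i))
    (f : ℝ → ℝ) (hf : ConvexOn ℝ Set.univ f) :
    ∑ j, ω j * f (x j) ≤ ∑ i, (ϑ i - θ i) * f (y i) := by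
  obtain ⟨h0, hle, hs, hm, hfull⟩ := hsh
  obtain ⟨a, b, hab, ha, hb, hla, hgb⟩ := exists_support_bounds h0 (by rw [hs]; exact hm0.ne')
  have hin : ∀ i, a < i → i < b → θ i = ϑ i := fun i h1 h2 => hfull a i b h1 h2 ha hb
  have hsupp : ∀ i, θ i ≠ 0 → a ≤ i ∧ i ≤ b := by
    intro i hi
    constructor
    · by_contra h; exact hi (hla i (not_le.1 h))
    · by_contra h; exact hi (hgb i (not_le.1 h))
  by_cases hab2 : a = b
  · -- point mass : θ = m0 • δ_a , y a = x0
    have hθa : θ a = m0 := by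
      rw [← hs]
      symm
      refine Finset.sum_eq_single a (fun i _ hi => ?_) (by simp)
      by_contra hne
      obtain ⟨h1, h2⟩ := hsupp i hne
      exact hi (le_antisymm (hab2 ▸ h2) h1)
    have hya : y a = x0 := by
      have : ∑ i, θ i * y i = θ a * y a := by
        refine Finset.sum_eq_single a (fun i _ hi => ?_) (by simp)
        by_contra hne
        have hne' : θ i ≠ 0 := fun hh => hne (by rw [hh, zero_mul])
        obtain ⟨h1, h2⟩ := hsupp i hne'
        exact hi (le_antisymm (hab2 ▸ h2) h1)
      rw [this, hθa] at hm
      exact mul_left_cancel₀ hm0.ne' hm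
    have hsum : ∑ i, θ i * f (y i) = m0 * f x0 := by
      rw [← hya, ← hθa]
      refine Finset.sum_eq_single a (fun i _ hi => ?_) (by simp)
      by_contra hne
      have hne' : θ i ≠ 0 := fun hh => hne (by rw [hh, zero_mul])
      obtain ⟨h1, h2⟩ := hsupp i hne'
      exact hi (le_antisymm (hab2 ▸ h2) h1)
    have expand : ∑ i, (ϑ i - θ i) * f (y i)
        = (∑ i, ϑ i * f (y i)) - ∑ i, θ i * f (y i) := by
      rw [← Finset.sum_sub_distrib]; congr 1; funext i; ring
    rw [expand, hsum]
    linarith [hcx f hf]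
  · -- genuine interval
    have hab' : a < b := lt_of_le_of_ne hab hab2
    have hyab : y a < y b := hy hab'
    set sl : ℝ := (f (y b) - f (y a)) / (y b - y a) with hsl
    set l : ℝ → ℝ := fun t => f (y a) + sl * (t - y a) with hl
    have hlconv : ConvexOn ℝ Set.univ l := by
      have : l = fun t => sl * t + (f (y a) - sl * y a) := funext fun t => by rw [hl]; ring
      rw [this]; exact affine_convexOn _ _
    set g : ℝ → ℝ := fun t => max (f t) (l t) with hg
    have hgconv : ConvexOn ℝ Set.univ g := by
      have : g = f ⊔ l := funext fun t => by
        simp [hg, Pi.sup_apply]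
      rw [this]; exact hf.sup hlconv
    have hgf : ∀ t, f t ≤ g t := fun t => le_max_left _ _
    have h_out : ∀ t, (t ≤ y a ∨ y b ≤ t) → g t = f t := by
      intro t ht
      exact max_eq_left (chord_le_outside hf hyab ht)
    have h_in : ∀ t, y a ≤ t → t ≤ y b → g t = l t := by
      intro t ht1 ht2
      exact max_eq_right (le_chord_inside hf hyab ht1 ht2)
    -- x0 lies in [y a, y b]
    have hmean_lo : y a * m0 ≤ m0 * x0 := by
      rw [← hm, ← hs, Finset.mul_sum]
      refine Finset.sum_le_sum (fun i _ => ?_)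
      by_cases hi : θ i = 0
      · rw [hi]; simp
      · have h1 := (hsupp i hi).1
        have h2 : y a ≤ y i := hy.monotone h1
        nlinarith [mul_le_mul_of_nonneg_right h2 (h0 i)]
    have hmean_hi : m0 * x0 ≤ y b * m0 := by
      rw [← hm, ← hs, Finset.mul_sum]
      refine Finset.sum_le_sum (fun i _ => ?_)
      by_cases hi : θ i = 0
      · rw [hi]; simp
      · have h1 := (hsupp i hi).2
        have h2 : y i ≤ y b := hy.monotone h1
        nlinarith [mul_le_mul_of_nonneg_right h2 (h0 i)]
    have hx0a : y a ≤ x0 := by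
      have := hmean_lo
      nlinarith
    have hx0b : x0 ≤ y b := by nlinarith
    have hgx0 : g x0 = l x0 := h_in x0 hx0a hx0b
    -- step 1
    have step1 : ∑ i, (ϑ i - θ i) * f (y i) = ∑ i, (ϑ i - θ i) * g (y i) := by
      refine Finset.sum_congr rfl (fun i _ => ?_)
      rcases le_or_gt i a with h1 | h1
      · rw [h_out (y i) (Or.inl (hy.monotone h1))]
      · rcases le_or_gt b i with h2 | h2
        · rw [h_out (y i) (Or.inr (hy.monotone h2))]
        · rw [hin i h1 h2]; ring
    -- step 2
    have step2 : ∑ i, θ i * g (y i) = ∑ i, θ i * l (y i) := by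
      refine Finset.sum_congr rfl (fun i _ => ?_)
      by_cases hi : θ i = 0
      · rw [hi, zero_mul, zero_mul]
      · obtain ⟨h1, h2⟩ := hsupp i hi
        rw [h_in (y i) (hy.monotone h1) (hy.monotone h2)]
    -- step 3
    have step3 : ∑ i, θ i * l (y i) = m0 * l x0 := by
      have e : ∀ i, θ i * l (y i)
          = f (y a) * θ i + sl * (θ i * y i) - sl * y a * θ i := fun i => by rw [hl]; ring
      rw [Finset.sum_congr rfl (fun i _ => e i)]
      rw [Finset.sum_sub_distrib, Finset.sum_add_distrib, ← Finset.mul_sum, ← Finset.mul_sum,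
        ← Finset.mul_sum, hs, hm, hl]
      ring
    -- combine
    have expand : ∑ i, (ϑ i - θ i) * g (y i)
        = (∑ i, ϑ i * g (y i)) - ∑ i, θ i * g (y i) := by
      rw [← Finset.sum_sub_distrib]; congr 1; funext i; ring
    have hmain := hcx g hgconv
    have hfg_sum : ∑ j, ω j * f (x j) ≤ ∑ j, ω j * g (x j) :=
      Finset.sum_le_sum (fun j _ => mul_le_mul_of_nonneg_left (hgf (x j)) (hω j))
    calc ∑ j, ω j * f (x j) ≤ ∑ j, ω j * g (x j) := hfg_sum
    _ = m0 * g x0 + ∑ j, ω j * g (x j) - m0 * l x0 := by rw [hgx0]; ring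
    _ ≤ (∑ i, ϑ i * g (y i)) - m0 * l x0 := by linarith [hmain]
    _ = (∑ i, ϑ i * g (y i)) - ∑ i, θ i * g (y i) := by rw [← step3, ← step2]
    _ = ∑ i, (ϑ i - θ i) * g (y i) := by rw [expand]
    _ = ∑ i, (ϑ i - θ i) * f (y i) := step1.symm

section Slice

variable {M : ℕ} {y ϑ : Fin M → ℝ}

set_option maxHeartbeats 1600000 in
/-- Existence of shadows via quantile slicing and the intermediate value theorem. -/
lemma shadow_exists (hy : StrictMono y) (hϑ : ∀ i, 0 ≤ ϑ i) {m0 x0 : ℝ} (hm0 : 0 < m0)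
    (hput : ∀ K, m0 * max (K - x0) 0 ≤ ∑ i, ϑ i * max (K - y i) 0)
    (hcall : ∀ K, m0 * max (x0 - K) 0 ≤ ∑ i, ϑ i * max (y i - K) 0)
    (hW : m0 ≤ ∑ i, ϑ i) :
    ∃ θ, IsShadow y ϑ m0 (m0 * x0) θ := by
  classical
  set W : ℝ := ∑ i, ϑ i with hWdef
  have hM : 0 < M := by
    rcases Nat.eq_zero_or_pos M with h | h
    · exfalso; subst h; simp [hWdef] at hW ⊢; linarith
    · exact h
  set ϑe : ℕ → ℝ := fun k => if h : k < M then ϑ ⟨k, h⟩ else 0 with hϑe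
  have hϑe0 : ∀ k, 0 ≤ ϑe k := by
    intro k; rw [hϑe]; dsimp only; split
    · exact hϑ _
    · exact le_refl 0
  set C : ℕ → ℝ := fun k => ∑ j ∈ Finset.range k, ϑe j with hC
  have hCmono : Monotone C := by
    intro u v huv
    exact Finset.sum_le_sum_of_subset_of_nonneg (Finset.range_subset_range.2 huv)
      (fun j _ _ => hϑe0 j)
  have hC0 : C 0 = 0 := by simp [hC]
  have hCM : C M = W := by
    rw [hWdef]
    simp only [hC]
    rw [← Fin.sum_univ_eq_sum_range (fun k => ϑe k) M]
    refine Finset.sum_congr rfl (fun i _ => ?_)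
    rw [hϑe]; simp [i.isLt]
  have hCnn : ∀ k, 0 ≤ C k := fun k => hC0 ▸ hCmono (Nat.zero_le k)
  have hCstep : ∀ i : Fin M, C (i.1 + 1) = C i.1 + ϑ i := by
    intro i
    rw [hC]; dsimp only
    rw [Finset.sum_range_succ, hϑe]; simp [i.isLt]
  -- the sliced measure
  set t : ℝ → Fin M → ℝ :=
    fun s i => max 0 (min (s + m0) (C (i.1 + 1)) - max s (C i.1)) with ht
  have htnn : ∀ s i, 0 ≤ t s i := fun s i => le_max_left _ _
  have htle : ∀ s i, t s i ≤ ϑ i := by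
    intro s i
    rw [ht]; dsimp only
    rw [max_le_iff]
    refine ⟨hϑ i, ?_⟩
    have h1 : min (s + m0) (C (i.1 + 1)) ≤ C (i.1 + 1) := min_le_right _ _
    have h2 : C i.1 ≤ max s (C i.1) := le_max_right _ _
    have := hCstep i
    linarith
  -- total mass
  have htmass : ∀ s, 0 ≤ s → s + m0 ≤ W → ∑ i, t s i = m0 := by
    intro s hs0 hsW
    set g : ℝ → ℝ := fun u => min (s + m0) (max s u) with hgdef
    have hg : ∀ u v, u ≤ v → g v - g u = max 0 (min (s + m0) v - max s u) := by
      intro u v huv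
      rw [hgdef]; dsimp only
      rcases le_total v s with h1 | h1 <;> rcases le_total (s + m0) u with h2 | h2 <;>
        simp only [min_def, max_def] <;> split_ifs <;> linarith
    have e : ∀ i : Fin M, t s i = g (C (i.1 + 1)) - g (C i.1) := by
      intro i
      rw [hg (C i.1) (C (i.1+1)) (hCmono (Nat.le_succ _))]
    rw [Finset.sum_congr rfl (fun i _ => e i)]
    have : ∑ i : Fin M, (g (C (i.1 + 1)) - g (C i.1))
        = ∑ k ∈ Finset.range M, (g (C (k + 1)) - g (C k)) :=
      Fin.sum_univ_eq_sum_range (fun k => g (C (k + 1)) - g (C k)) M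
    rw [this, Finset.sum_range_sub (fun k => g (C k)), hC0, hCM, hgdef]
    dsimp only
    have h1 : max s W = W := max_eq_right (by linarith)
    have h2 : max s (0:ℝ) = s := max_eq_left hs0
    rw [h1, h2, min_eq_left (by linarith), min_eq_right (by linarith)]
    ring
  -- interval property
  have htfull : ∀ s (i l k : Fin M), i < l → l < k → 0 < t s i → 0 < t s k → t s l = ϑ l := by
    intro s i l k hil hlk hti htk
    rw [ht] at hti htk ⊢
    dsimp only at hti htk ⊢
    rw [lt_max_iff] at hti htk
    have hti' : 0 < min (s + m0) (C (i.1 + 1)) - max s (C i.1) := by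
      rcases hti with h | h
      · exact absurd h (lt_irrefl 0)
      · exact h
    have htk' : 0 < min (s + m0) (C (k.1 + 1)) - max s (C k.1) := by
      rcases htk with h | h
      · exact absurd h (lt_irrefl 0)
      · exact h
    have h1 : s < C (i.1 + 1) := by
      have := min_le_right (s + m0) (C (i.1 + 1))
      have := le_max_left s (C i.1)
      linarith
    have h2 : C k.1 < s + m0 := by
      have := min_le_left (s + m0) (C (k.1 + 1))
      have := le_max_right s (C k.1)
      linarith
    have hil' : i.1 < l.1 := hil
    have hlk' : l.1 < k.1 := hlk
    have hsl : s ≤ C l.1 := le_trans h1.le (hCmono (Nat.succ_le_of_lt hil'))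
    have hls : C (l.1 + 1) ≤ s + m0 := le_trans (hCmono (Nat.succ_le_of_lt hlk')) h2.le
    rw [min_eq_right hls, max_eq_right hsl, hCstep l, add_sub_cancel_left, max_eq_right (hϑ l)]
  -- continuity of the mean
  have hcont : Continuous (fun s => ∑ i, t s i * y i) := by
    refine continuous_finset_sum _ (fun i _ => ?_)
    rw [ht]; fun_prop
  set m : ℝ → ℝ := fun s => ∑ i, t s i * y i with hmdef
  set s₁ : ℝ := W - m0 with hs₁
  have hs₁0 : 0 ≤ s₁ := by rw [hs₁]; linarith
  -- lower endpoint: m 0 ≤ m0 * x0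
  have hlow : m 0 ≤ m0 * x0 := by
    have hne : (Finset.univ.filter (fun i : Fin M => m0 ≤ C (i.1 + 1))).Nonempty := by
      refine ⟨⟨M - 1, by omega⟩, Finset.mem_filter.2 ⟨Finset.mem_univ _, ?_⟩⟩
      have : M - 1 + 1 = M := by omega
      rw [this, hCM]; exact hW
    set b0 := (Finset.univ.filter (fun i : Fin M => m0 ≤ C (i.1 + 1))).min' hne with hb0
    have hb0mem := (Finset.univ.filter (fun i : Fin M => m0 ≤ C (i.1 + 1))).min'_mem hne
    have hb0C : m0 ≤ C (b0.1 + 1) := (Finset.mem_filter.1 hb0mem).2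
    have hb0min : ∀ i : Fin M, i < b0 → C (i.1 + 1) < m0 := by
      intro i hi
      by_contra h
      have : i ∈ Finset.univ.filter (fun i : Fin M => m0 ≤ C (i.1 + 1)) :=
        Finset.mem_filter.2 ⟨Finset.mem_univ _, not_lt.1 h⟩
      exact absurd (Finset.min'_le _ i this) (not_le.2 hi)
    have eq1 : ∀ i : Fin M, t 0 i * (y b0 - y i) = ϑ i * max (y b0 - y i) 0 := by
      intro i
      rcases lt_trichotomy i b0 with h | h | h
      · have hC1 : C (i.1 + 1) < m0 := hb0min i h
        have he : t 0 i = ϑ i := by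
          rw [ht]; dsimp only
          rw [zero_add, max_eq_right (hCnn i.1), min_eq_right hC1.le, hCstep i,
            add_sub_cancel_left, max_eq_right (hϑ i)]
        rw [he, max_eq_left (by linarith [hy h] : (0:ℝ) ≤ y b0 - y i)]
      · rw [h]; simp
      · have he : t 0 i = 0 := by
          rw [ht]; dsimp only
          rw [zero_add, max_eq_right (hCnn i.1)]
          have hbi : b0.1 < i.1 := h
          have h1 : C (b0.1 + 1) ≤ C i.1 := hCmono (Nat.succ_le_of_lt hbi)
          have h2 : min m0 (C (i.1 + 1)) ≤ m0 := min_le_left _ _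
          rw [max_eq_left]
          linarith
        rw [he, zero_mul, max_eq_right (by linarith [hy h] : y b0 - y i ≤ 0), mul_zero]
    have hmass0 : ∑ i, t 0 i = m0 := htmass 0 le_rfl (by linarith)
    have hsum1 : ∑ i, t 0 i * (y b0 - y i) = ∑ i, ϑ i * max (y b0 - y i) 0 :=
      Finset.sum_congr rfl (fun i _ => eq1 i)
    have expand : ∑ i, t 0 i * (y b0 - y i)
        = y b0 * (∑ i, t 0 i) - ∑ i, t 0 i * y i := by
      rw [Finset.mul_sum, ← Finset.sum_sub_distrib]
      refine Finset.sum_congr rfl (fun i _ => by ring)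
    have h2 := hput (y b0)
    have h3 : m0 * (y b0 - x0) ≤ m0 * max (y b0 - x0) 0 :=
      mul_le_mul_of_nonneg_left (le_max_left _ _) hm0.le
    have expand2 : ∑ i, t 0 i * (y b0 - y i) = y b0 * m0 - ∑ i, t 0 i * y i := by
      rw [expand, hmass0]
    simp only [hmdef]
    linarith [hsum1, expand2, h2, h3]
  -- upper endpoint: m0 * x0 ≤ m s₁
  have hWs : s₁ + m0 = W := by rw [hs₁]; ring
  have hhigh : m0 * x0 ≤ m s₁ := by
    have hne : (Finset.univ.filter (fun i : Fin M => s₁ < C (i.1 + 1))).Nonempty := by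
      refine ⟨⟨M - 1, by omega⟩, Finset.mem_filter.2 ⟨Finset.mem_univ _, ?_⟩⟩
      have e : M - 1 + 1 = M := by omega
      rw [e, hCM, hs₁]; linarith
    set a0 := (Finset.univ.filter (fun i : Fin M => s₁ < C (i.1 + 1))).min' hne with ha0
    have ha0mem := (Finset.univ.filter (fun i : Fin M => s₁ < C (i.1 + 1))).min'_mem hne
    have ha0C : s₁ < C (a0.1 + 1) := (Finset.mem_filter.1 ha0mem).2
    have ha0min : ∀ i : Fin M, i < a0 → C (i.1 + 1) ≤ s₁ := by
      intro i hi
      by_contra h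
      have : i ∈ Finset.univ.filter (fun i : Fin M => s₁ < C (i.1 + 1)) :=
        Finset.mem_filter.2 ⟨Finset.mem_univ _, not_le.1 h⟩
      exact absurd (Finset.min'_le _ i this) (not_le.2 hi)
    have eq2 : ∀ i : Fin M, t s₁ i * (y i - y a0) = ϑ i * max (y i - y a0) 0 := by
      intro i
      rcases lt_trichotomy i a0 with h | h | h
      · have he : t s₁ i = 0 := by
          rw [ht]; dsimp only
          have h1 : min (s₁ + m0) (C (i.1 + 1)) ≤ C (i.1 + 1) := min_le_right _ _
          have h2 : s₁ ≤ max s₁ (C i.1) := le_max_left _ _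
          have h3 := ha0min i h
          rw [max_eq_left]
          linarith
        rw [he, zero_mul, max_eq_right (by linarith [hy h] : y i - y a0 ≤ 0), mul_zero]
      · rw [h]; simp
      · have hai : a0.1 < i.1 := h
        have h1 : C (a0.1 + 1) ≤ C i.1 := hCmono (Nat.succ_le_of_lt hai)
        have he : t s₁ i = ϑ i := by
          rw [ht]; dsimp only
          have h2 : C (i.1 + 1) ≤ s₁ + m0 := by
            rw [hWs, ← hCM]; exact hCmono (Nat.succ_le_of_lt i.isLt)
          rw [min_eq_right h2, max_eq_right (show s₁ ≤ C i.1 by linarith), hCstep i,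
            add_sub_cancel_left, max_eq_right (hϑ i)]
        rw [he, max_eq_left (by linarith [hy h] : (0:ℝ) ≤ y i - y a0)]
    have hmass1 : ∑ i, t s₁ i = m0 := htmass s₁ hs₁0 (by linarith)
    have hsum2 : ∑ i, t s₁ i * (y i - y a0) = ∑ i, ϑ i * max (y i - y a0) 0 :=
      Finset.sum_congr rfl (fun i _ => eq2 i)
    have expand : ∑ i, t s₁ i * (y i - y a0)
        = (∑ i, t s₁ i * y i) - y a0 * (∑ i, t s₁ i) := by
      rw [Finset.mul_sum, ← Finset.sum_sub_distrib]
      refine Finset.sum_congr rfl (fun i _ => by ring)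
    have h2 := hcall (y a0)
    have h3 : m0 * (x0 - y a0) ≤ m0 * max (x0 - y a0) 0 :=
      mul_le_mul_of_nonneg_left (le_max_left _ _) hm0.le
    have expand2 : ∑ i, t s₁ i * (y i - y a0) = (∑ i, t s₁ i * y i) - y a0 * m0 := by
      rw [expand, hmass1]
    simp only [hmdef]
    linarith [hsum2, expand2, h2, h3]
  -- intermediate value theorem
  have hsub := intermediate_value_Icc hs₁0 hcont.continuousOn
  have hmem : m0 * x0 ∈ Set.Icc (m 0) (m s₁) := ⟨hlow, hhigh⟩
  obtain ⟨s, hsmem, hms⟩ := hsub hmem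
  refine ⟨t s, htnn s, htle s, htmass s hsmem.1 ?_, ?_, htfull s⟩
  · have := hsmem.2; rw [hs₁] at this; linarith
  · simpa [hmdef] using hms
end Slice

lemma put_convexOn (K : ℝ) : ConvexOn ℝ Set.univ (fun t => max (K - t) 0) := by
  have h : (fun t => max (K - t) 0)
      = (fun t : ℝ => (-1) * t + K) ⊔ (fun _ : ℝ => (0:ℝ)) := by
    funext t; simp only [Pi.sup_apply]; congr 1; ring
  rw [h]; exact (affine_convexOn (-1) K).sup (convexOn_const 0 convex_univ)

lemma call_convexOn (K : ℝ) : ConvexOn ℝ Set.univ (fun t => max (t - K) 0) := by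
  have h : (fun t => max (t - K) 0)
      = (fun t : ℝ => 1 * t + (-K)) ⊔ (fun _ : ℝ => (0:ℝ)) := by
    funext t; simp only [Pi.sup_apply]; congr 1; ring
  rw [h]; exact (affine_convexOn 1 (-K)).sup (convexOn_const 0 convex_univ)

set_option maxHeartbeats 1600000 in
lemma gen {M : ℕ} (y : Fin M → ℝ) (hy : StrictMono y) :
    ∀ (N : ℕ) (x : Fin N → ℝ) (ω : Fin N → ℝ) (ϑ : Fin M → ℝ),
      StrictMono x → (∀ j, 0 < ω j) → (∀ i, 0 ≤ ϑ i) →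
      (∀ f : ℝ → ℝ, ConvexOn ℝ Set.univ f →
        ∑ j, ω j * f (x j) ≤ ∑ i, ϑ i * f (y i)) →
      ∃! q : Fin N → Fin M → ℝ,
        ((∀ j i, 0 ≤ q j i) ∧ (∀ j, ∑ i, q j i = ω j) ∧ (∀ i, ∑ j, q j i = ϑ i) ∧
          (∀ j, ∑ i, q j i * (y i - x j) = 0)) ∧
        (∀ j j' : Fin N, ∀ im i' ip : Fin M, x j < x j' → y im < y i' → y i' < y ip →
          0 < q j im → 0 < q j ip → ¬ 0 < q j' i') := by
  intro N
  induction N with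
  | zero =>
    intro x ω ϑ hx hω hϑ hcx
    have hϑ0 : ∀ i, ϑ i = 0 := by
      have h1 := hcx (fun _ => 1) (convexOn_const 1 convex_univ)
      have h2 := hcx (fun _ => -1) (convexOn_const (-1) convex_univ)
      simp only [Finset.univ_eq_empty, Finset.sum_empty, mul_one, mul_neg_one] at h1 h2
      have hsum : ∑ i, ϑ i = 0 := by
        have : ∑ i, -ϑ i = -∑ i, ϑ i := by rw [Finset.sum_neg_distrib]
        rw [this] at h2; linarith
      intro i
      have := (Finset.sum_eq_zero_iff_of_nonneg (fun i _ => hϑ i)).1 hsum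
      exact this i (Finset.mem_univ i)
    refine ⟨fun j => j.elim0, ⟨⟨fun j => j.elim0, fun j => j.elim0, ?_, fun j => j.elim0⟩,
      fun j => j.elim0⟩, ?_⟩
    · intro i; simp [hϑ0 i]
    · intro q _; funext j; exact j.elim0
  | succ n ih =>
    intro x ω ϑ hx hω hϑ hcx
    have hxsucc : StrictMono (fun j : Fin n => x j.succ) :=
      fun a b h => hx (Fin.succ_lt_succ_iff.mpr h)
    -- derive the shadow
    have hput : ∀ K, ω 0 * max (K - x 0) 0 ≤ ∑ i, ϑ i * max (K - y i) 0 := by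
      intro K
      refine le_trans ?_ (hcx (fun t => max (K - t) 0) (put_convexOn K))
      have h := Finset.single_le_sum (f := fun j => ω j * max (K - x j) 0)
        (fun j _ => mul_nonneg (hω j).le (le_max_right _ _)) (Finset.mem_univ (0 : Fin (n+1)))
      simpa using h
    have hcall : ∀ K, ω 0 * max (x 0 - K) 0 ≤ ∑ i, ϑ i * max (y i - K) 0 := by
      intro K
      refine le_trans ?_ (hcx (fun t => max (t - K) 0) (call_convexOn K))
      have h := Finset.single_le_sum (f := fun j => ω j * max (x j - K) 0)
        (fun j _ => mul_nonneg (hω j).le (le_max_right _ _)) (Finset.mem_univ (0 : Fin (n+1)))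
      simpa using h
    have hW : ω 0 ≤ ∑ i, ϑ i := by
      have h1 := hcx (fun _ => 1) (convexOn_const 1 convex_univ)
      simp only [mul_one] at h1
      exact le_trans (Finset.single_le_sum (fun j _ => (hω j).le) (Finset.mem_univ 0)) h1
    obtain ⟨θ, hsh⟩ := shadow_exists hy hϑ (hω 0) hput hcall hW
    obtain ⟨hθ0, hθle, hθs, hθm, hθfull⟩ := hsh
    set ϑ' : Fin M → ℝ := fun i => ϑ i - θ i with hϑ'def
    have hϑ'0 : ∀ i, 0 ≤ ϑ' i := fun i => by rw [hϑ'def]; dsimp only; linarith [hθle i]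
    have hcx' : ∀ f : ℝ → ℝ, ConvexOn ℝ Set.univ f →
        ∑ j : Fin n, ω j.succ * f (x j.succ) ≤ ∑ i, ϑ' i * f (y i) := by
      intro f hf
      exact shadow_reduce (fun j : Fin n => x j.succ) (fun j : Fin n => ω j.succ)
        (fun j => (hω _).le) hy (hω 0) ⟨hθ0, hθle, hθs, hθm, hθfull⟩
        (fun g hg => by
          have := hcx g hg
          rw [Fin.sum_univ_succ] at this
          exact this) f hf
    obtain ⟨q', ⟨⟨hq'0, hq'row, hq'col, hq'mart⟩, hq'LM⟩, hq'uniq⟩ :=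
      ih (fun j : Fin n => x j.succ) (fun j : Fin n => ω j.succ) ϑ' hxsucc
        (fun j => hω _) hϑ'0 hcx'
    set Q : Fin (n+1) → Fin M → ℝ := Fin.cases θ q' with hQdef
    have hQ0 : Q 0 = θ := rfl
    have hQs : ∀ j : Fin n, Q j.succ = q' j := fun j => by
      rw [hQdef]; exact Fin.cases_succ j
    -- an auxiliary fact used repeatedly
    have col_zero : ∀ i', ϑ' i' = 0 → ∀ j : Fin n, q' j i' = 0 := by
      intro i' hz j
      have hle' : q' j i' ≤ ∑ j', q' j' i' :=
        Finset.single_le_sum (fun j' _ => hq'0 j' i') (Finset.mem_univ j)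
      rw [hq'col i', hz] at hle'
      exact le_antisymm hle' (hq'0 j i')
    refine ⟨Q, ⟨⟨?_, ?_, ?_, ?_⟩, ?_⟩, ?_⟩
    · -- nonneg
      intro j i
      rcases Fin.eq_zero_or_eq_succ j with rfl | ⟨j1, rfl⟩
      · rw [hQ0]; exact hθ0 i
      · rw [hQs j1]; exact hq'0 j1 i
    · -- rows
      intro j
      rcases Fin.eq_zero_or_eq_succ j with rfl | ⟨j1, rfl⟩
      · rw [hQ0]; exact hθs
      · rw [hQs j1]; exact hq'row j1
    · -- cols
      intro i
      rw [Fin.sum_univ_succ]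
      have e : ∀ j : Fin n, Q j.succ i = q' j i := fun j => by rw [hQs j]
      rw [hQ0, Finset.sum_congr rfl (fun j _ => e j), hq'col i, hϑ'def]
      ring
    · -- martingale
      intro j
      rcases Fin.eq_zero_or_eq_succ j with rfl | ⟨j1, rfl⟩
      · rw [hQ0]
        have e1 : ∑ i, θ i * (y i - x 0) = (∑ i, θ i * y i) - x 0 * (∑ i, θ i) := by
          rw [Finset.mul_sum, ← Finset.sum_sub_distrib]
          exact Finset.sum_congr rfl (fun i _ => by ring)
        rw [e1, hθs, hθm]; ring
      · rw [hQs j1]; exact hq'mart j1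
    · -- left-monotonicity
      intro j j' im i' ip hxx hy1 hy2 hp1 hp2
      rcases Fin.eq_zero_or_eq_succ j with rfl | ⟨j1, rfl⟩
      · rcases Fin.eq_zero_or_eq_succ j' with rfl | ⟨j2, rfl⟩
        · exact absurd hxx (lt_irrefl _)
        · rw [hQ0] at hp1 hp2
          have him : im < i' := hy.lt_iff_lt.1 hy1
          have hip : i' < ip := hy.lt_iff_lt.1 hy2
          have hfull := hθfull im i' ip him hip hp1 hp2
          have hz : ϑ' i' = 0 := by rw [hϑ'def]; dsimp only; rw [hfull]; ring
          rw [hQs j2, col_zero i' hz j2]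
          exact lt_irrefl 0
      · rcases Fin.eq_zero_or_eq_succ j' with rfl | ⟨j2, rfl⟩
        · exact absurd hxx (not_lt.2 (hx.monotone (Fin.zero_le _)))
        · rw [hQs j1] at hp1 hp2
          rw [hQs j2]
          exact hq'LM j1 j2 im i' ip hxx hy1 hy2 hp1 hp2
    · -- uniqueness
      rintro qt ⟨⟨ht0, htrow, htcol, htmart⟩, htLM⟩
      set θt : Fin M → ℝ := fun i => qt 0 i with hθtdef
      have hshθt : IsShadow y ϑ (ω 0) (ω 0 * x 0) θt := by
        refine ⟨fun i => ht0 0 i, ?_, htrow 0, ?_, ?_⟩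
        · intro i
          have := Finset.single_le_sum (fun j _ => ht0 j i) (Finset.mem_univ (0 : Fin (n+1)))
          rw [htcol i] at this
          exact this
        · have h := htmart 0
          have e1 : ∑ i, qt 0 i * (y i - x 0)
              = (∑ i, qt 0 i * y i) - x 0 * (∑ i, qt 0 i) := by
            rw [Finset.mul_sum, ← Finset.sum_sub_distrib]
            exact Finset.sum_congr rfl (fun i _ => by ring)
          rw [e1, htrow 0] at h
          have : ∑ i, qt 0 i * y i = x 0 * ω 0 := by linarith
          rw [hθtdef]; dsimp only; rw [this]; ring
        · intro i l k hil hlk h1 h2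
          have hzero : ∀ j : Fin n, qt j.succ l = 0 := by
            intro j
            have hLM := htLM 0 j.succ i l k (hx (Fin.succ_pos j)) (hy hil) (hy hlk) h1 h2
            exact le_antisymm (not_lt.1 hLM) (ht0 j.succ l)
          have hc := htcol l
          rw [Fin.sum_univ_succ, Finset.sum_congr rfl (fun j _ => hzero j)] at hc
          simp at hc
          rw [hθtdef]; exact hc
      have hθteq : θt = θ :=
        shadow_unique hy (hω 0) hshθt ⟨hθ0, hθle, hθs, hθm, hθfull⟩
      have htail : (fun (j : Fin n) (i : Fin M) => qt j.succ i) = q' := by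
        refine hq'uniq _ ⟨⟨fun j i => ht0 j.succ i, fun j => htrow j.succ, ?_,
          fun j => htmart j.succ⟩, ?_⟩
        · intro i
          have hc := htcol i
          rw [Fin.sum_univ_succ] at hc
          have : qt 0 i = θ i := by rw [← hθteq, hθtdef]
          rw [this] at hc
          rw [hϑ'def]; dsimp only
          linarith
        · intro j j' im i' ip hxx hy1 hy2 hp1 hp2
          exact htLM j.succ j'.succ im i' ip hxx hy1 hy2 hp1 hp2
      funext j i
      rcases Fin.eq_zero_or_eq_succ j with rfl | ⟨j1, rfl⟩
      · rw [hQ0, ← hθteq, hθtdef]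
      · rw [hQs j1, ← htail]


/-- For finitely supported probability measures `μ ≤_c ν` on `ℝ`, there exists exactly one
left-monotone martingale transport plan. -/
theorem stmt13 (N M : ℕ) (x : Fin N → ℝ) (y : Fin M → ℝ) (ω : Fin N → ℝ) (ϑ : Fin M → ℝ)
    (hx : StrictMono x) (hy : StrictMono y)
    (hω : ∀ j, 0 < ω j) (hϑ : ∀ i, 0 < ϑ i)
    (hω1 : ∑ j, ω j = 1) (hϑ1 : ∑ i, ϑ i = 1)
    (hcx : ∀ f : ℝ → ℝ, ConvexOn ℝ Set.univ f →
        ∑ j, ω j * f (x j) ≤ ∑ i, ϑ i * f (y i)) :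
    ∃! q : Fin N → Fin M → ℝ,
      ((∀ j i, 0 ≤ q j i) ∧ (∀ j, ∑ i, q j i = ω j) ∧ (∀ i, ∑ j, q j i = ϑ i) ∧
        (∀ j, ∑ i, q j i * (y i - x j) = 0)) ∧
      (∀ j j' : Fin N, ∀ im i' ip : Fin M, x j < x j' → y im < y i' → y i' < y ip →
        0 < q j im → 0 < q j ip → ¬ 0 < q j' i') := by
  exact gen y hy N x ω ϑ hx hω (fun i => (hϑ i).le) hcx
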